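/- Let n ≥ 1 and let a be the n×n lower-triangular Pascal matrix over the integers, with (i,j) entry equal to the binomial coefficient C(i−1, j−1) when i ≥ j and 0 when i < j, and set a₀ = a − I. For every ℓ ≥ 1: (a₀^ℓ)_{j,1} = 0 for all j ≤ ℓ, and if ℓ + 1 ≤ n then (a₀^ℓ)_{ℓ+1,1} = ℓ!. -/
import Mathlib


/-- Lemma 2.5(1): if `a` is the `n × n` lower-triangular Pascal matrix (with `(i,j)` entry
`C(i-1, j-1)` for `i ≥ j`, indexed here from `0`, so entry `(i,j)` is `C(i,j)`) and
`a₀ = a - I`, then for `ℓ ≥ 1` the first column of `a₀^ℓ` vanishes in rows `1, …, ℓ`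
(one-indexed `j ≤ ℓ`), and its `(ℓ+1, 1)`-st (one-indexed) entry equals `ℓ!`. -/
theorem pascal_pow_col_one (n : ℕ) (hn : 1 ≤ n) (a : Matrix (Fin n) (Fin n) ℤ)
    (ha : ∀ i j : Fin n, a i j =
      if (j : ℕ) ≤ (i : ℕ) then ((i : ℕ).choose (j : ℕ) : ℤ) else 0)
    (ℓ : ℕ) (hℓ : 1 ≤ ℓ) :
    (∀ j : Fin n, (j : ℕ) < ℓ → ((a - 1) ^ ℓ) j ⟨0, hn⟩ = 0) ∧
    (∀ h : ℓ + 1 ≤ n, ((a - 1) ^ ℓ) ⟨ℓ, h⟩ ⟨0, hn⟩ = (Nat.factorial ℓ : ℤ)) := by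
  have hsub : ∀ i j : Fin n, (a - 1) i j =
      if (j : ℕ) < (i : ℕ) then ((i : ℕ).choose (j : ℕ) : ℤ) else 0 := by
    intro i j
    have : (a - 1) i j = a i j - (if i = j then (1:ℤ) else 0) := by
      simp [Matrix.sub_apply, Matrix.one_apply]
    rw [this, ha]
    rcases lt_trichotomy (j : ℕ) (i : ℕ) with h | h | h
    · have hne : i ≠ j := fun hij => by simp [hij] at h
      simp [h.le, h, hne]
    · have hij : i = j := Fin.ext h.symm
      simp [hij]
    · have hne : i ≠ j := fun hij => by simp [hij] at h
      simp [not_le.mpr h, not_lt.mpr h.le, hne]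
  induction ℓ, hℓ using Nat.le_induction with
  | base =>
    constructor
    · intro j hj
      have hj0 : (j : ℕ) = 0 := Nat.lt_one_iff.mp hj
      rw [pow_one, hsub]
      simp [hj0]
    · intro h
      rw [pow_one, hsub]
      simp
  | succ ℓ hℓ ih =>
    have hmul : ∀ i : Fin n, ((a - 1) ^ (ℓ + 1)) i ⟨0, hn⟩ =
        ∑ k, (a - 1) i k * ((a - 1) ^ ℓ) k ⟨0, hn⟩ := by
      intro i
      rw [pow_succ', Matrix.mul_apply]
    constructor
    · intro j hj
      rw [hmul]
      apply Finset.sum_eq_zero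
      intro k _
      by_cases hk : (k : ℕ) < ℓ
      · rw [ih.1 k hk, mul_zero]
      · have : ¬ ((k : ℕ) < (j : ℕ)) := by omega
        rw [hsub, if_neg this, zero_mul]
    · intro h
      rw [hmul]
      have hℓn : ℓ + 1 ≤ n := by omega
      have hkey : ∀ k : Fin n, k ≠ ⟨ℓ, by omega⟩ →
          (a - 1) ⟨ℓ + 1, h⟩ k * ((a - 1) ^ ℓ) k ⟨0, hn⟩ = 0 := by
        intro k hk
        by_cases hk1 : (k : ℕ) < ℓ
        · rw [ih.1 k hk1, mul_zero]
        · have hkℓ : (k : ℕ) ≠ ℓ := fun hh => hk (Fin.ext hh)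
          have : ¬ ((k : ℕ) < ℓ + 1) := by omega
          rw [hsub, if_neg this, zero_mul]
      rw [Finset.sum_eq_single (⟨ℓ, by omega⟩ : Fin n) (fun k _ hk => hkey k hk)
        (fun hmem => absurd (Finset.mem_univ _) hmem)]
      rw [ih.2 hℓn, hsub]
      simp [Nat.choose_succ_self_right, Nat.factorial_succ]
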